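/- The gamma KL divergence formula is nonnegative: for a₁,a₂,b₁,b₂ > 0, a₂·ln(b₁/b₂) - ln(Γ(a₁)/Γ(a₂)) + (a₁-a₂)ψ(a₁) - (b₁-b₂)(a₁/b₁) ≥ 0, with equality iff a₁=a₂ and b₁=b₂. -/

import Mathlib

open Real Set Filter Topology

/-- Digamma function ψ = Γ'/Γ. -/
noncomputable def digamma (x : ℝ) : ℝ := deriv Real.Gamma x / Real.Gamma x




lemma diffGamma {x : ℝ} (hx : 0 < x) : DifferentiableAt ℝ Real.Gamma x :=
  Real.differentiableAt_Gamma fun m ↦ by have := Nat.cast_nonneg (α := ℝ) m; intro h; rw [h] at hx; linarith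

lemma gammaNe {x : ℝ} (hx : 0 < x) : Real.Gamma x ≠ 0 :=
  (Real.Gamma_pos_of_pos hx).ne'

lemma hasDerivAt_logGamma {x : ℝ} (hx : 0 < x) :
    HasDerivAt (fun y => Real.log (Real.Gamma y)) (digamma x) x :=
  (diffGamma hx).hasDerivAt.log (gammaNe hx)

lemma digamma_add_one {x : ℝ} (hx : 0 < x) : digamma (x + 1) = digamma x + 1 / x := by
  have h1 : HasDerivAt (fun y => Real.Gamma (y + 1)) (deriv Real.Gamma (x + 1)) x :=
    ((diffGamma (by linarith)).hasDerivAt.comp_add_const)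
  have h2 : HasDerivAt (fun y => y * Real.Gamma y)
      (1 * Real.Gamma x + x * deriv Real.Gamma x) x :=
    (hasDerivAt_id x).mul (diffGamma hx).hasDerivAt
  have heq : deriv Real.Gamma (x + 1) = 1 * Real.Gamma x + x * deriv Real.Gamma x := by
    have hev : (fun y => Real.Gamma (y + 1)) =ᶠ[𝓝 x] fun y => y * Real.Gamma y := by
      filter_upwards [eventually_gt_nhds hx] with y hy
      rw [Real.Gamma_add_one hy.ne']
    exact (h1.congr_of_eventuallyEq hev.symm).unique h2
  have hΓ := gammaNe hx
  rw [digamma, digamma, heq, Real.Gamma_add_one hx.ne']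
  field_simp
  ring








lemma digamma_add_nat {x : ℝ} (hx : 0 < x) (n : ℕ) :
    digamma (x + n) = digamma x + ∑ k ∈ Finset.range n, 1 / (x + k) := by
  induction n with
  | zero => simp
  | succ n ih =>
    have : x + (n + 1 : ℕ) = (x + n) + 1 := by push_cast; ring
    rw [this, digamma_add_one (by positivity), ih, Finset.sum_range_succ]
    ring

lemma hasDerivAt_logGamma' {x : ℝ} (hx : 0 < x) :
    HasDerivAt (Real.log ∘ Real.Gamma) (digamma x) x := hasDerivAt_logGamma hx

lemma logGamma_add_one {y : ℝ} (hy : 0 < y) :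
    (Real.log ∘ Real.Gamma) (y + 1) = Real.log y + (Real.log ∘ Real.Gamma) y := by
  simp only [Function.comp_apply, Real.Gamma_add_one hy.ne',
    Real.log_mul hy.ne' (gammaNe hy)]

lemma digamma_le_log {y : ℝ} (hy : 0 < y) : digamma y ≤ Real.log y := by
  have h := Real.convexOn_log_Gamma.deriv_le_slope (mem_Ioi.mpr hy)
    (mem_Ioi.mpr (by linarith : (0:ℝ) < y + 1)) (by linarith)
    ((diffGamma hy).log (gammaNe hy))
  rw [(hasDerivAt_logGamma' hy).deriv, slope_def_field, logGamma_add_one hy] at h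
  calc digamma y ≤ _ := h
    _ = Real.log y := by field_simp; ring

lemma log_le_digamma {y : ℝ} (hy : 1 < y) : Real.log (y - 1) ≤ digamma y := by
  have hy0 : (0:ℝ) < y := by linarith
  have hy1 : (0:ℝ) < y - 1 := by linarith
  have h := Real.convexOn_log_Gamma.slope_le_deriv (mem_Ioi.mpr hy1)
    (mem_Ioi.mpr hy0) (by linarith)
    ((diffGamma hy0).log (gammaNe hy0))
  rw [(hasDerivAt_logGamma' hy0).deriv, slope_def_field] at h
  refine le_trans (le_of_eq ?_) h
  have : y = (y - 1) + 1 := by ring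
  rw [this, logGamma_add_one hy1]
  field_simp
  rw [show y - 1 + 1 - 1 = y - 1 by ring]; ring


lemma termwise {a b : ℝ} (ha : 0 < a) (hab : a < b) :
    Real.log b - Real.log a - (Real.log (b+1) - Real.log (a+1)) < 1/a - 1/b := by
  set g : ℝ → ℝ := fun t => 1/a - 1/t - Real.log t + Real.log a
    + Real.log (t+1) - Real.log (a+1) with hg
  have hder : ∀ t : ℝ, 0 < t → HasDerivAt g (0 - (-(t^2)⁻¹) - t⁻¹ + 0 + (t+1)⁻¹ - 0) t := by
    intro t ht
    have h1 : HasDerivAt (fun y:ℝ => 1/y) (-(t^2)⁻¹) t := by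
      simpa using hasDerivAt_inv ht.ne'
    have h3 : HasDerivAt (fun y:ℝ => Real.log (y+1)) (t+1)⁻¹ t :=
      (Real.hasDerivAt_log (by linarith)).comp_add_const
    exact (((((hasDerivAt_const t (1/a)).sub h1).sub
      (Real.hasDerivAt_log ht.ne')).add (hasDerivAt_const t (Real.log a))).add h3).sub
      (hasDerivAt_const t (Real.log (a+1)))
  have hmono : StrictMonoOn g (Ici a) := by
    refine strictMonoOn_of_deriv_pos (convex_Ici a) ?_ ?_
    · intro t ht
      exact (hder t (lt_of_lt_of_le ha ht)).continuousAt.continuousWithinAt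
    · intro t ht
      rw [interior_Ici] at ht
      have ht0 : 0 < t := ha.trans ht
      rw [(hder t ht0).deriv]
      have : 0 - (-(t^2)⁻¹) - t⁻¹ + 0 + (t+1)⁻¹ - 0 = 1/(t^2*(t+1)) := by
        field_simp
        ring
      rw [this]
      positivity
  have h0 : g a = 0 := by simp [hg]
  have hb : 0 < g b := by
    rw [← h0]
    exact hmono self_mem_Ici (mem_Ici.mpr hab.le) hab
  simp only [hg] at hb
  linarith








lemma digamma_sub_log_strictMono {u v : ℝ} (hu : 0 < u) (huv : u < v) :
    digamma u - Real.log u < digamma v - Real.log v := by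
  have hv : 0 < v := hu.trans huv
  set ε : ℝ := (1/u - 1/v) - (Real.log v - Real.log u - (Real.log (v+1) - Real.log (u+1)))
    with hε
  have hεpos : 0 < ε := by have := termwise hu huv; simp only [hε]; linarith
  set p : ℕ → ℝ := fun k => Real.log (v + k) - Real.log (u + k) with hp
  -- key bound for each n
  have key : ∀ n : ℕ, ε + Real.log v - Real.log u +
      (Real.log (v + n) - Real.log (v + n + 1)) ≤ digamma v - digamma u := by
    intro n
    set m : ℕ := n + 1 with hm
    -- sum bound
    have hsum : ε + ∑ k ∈ Finset.range m, (p k - p (k+1)) ≤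
        ∑ k ∈ Finset.range m, (1/(u+k) - 1/(v+k)) := by
      have hterm : ∀ k : ℕ, p k - p (k+1) ≤ 1/(u+(k:ℝ)) - 1/(v+(k:ℝ)) := by
        intro k
        have h := termwise (a := u + k) (b := v + k) (by positivity) (by linarith)
        simp only [hp]
        push_cast
        ring_nf at h ⊢
        linarith [h]
      have h0 : ε = (1/(u+(0:ℕ):ℝ) - 1/(v+(0:ℕ):ℝ)) - (p 0 - p 1) := by
        simp [hε, hp]
      have hsingle : (1/(u+(0:ℕ):ℝ) - 1/(v+(0:ℕ):ℝ)) - (p 0 - p 1) ≤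
          ∑ k ∈ Finset.range m, ((1/(u+(k:ℝ)) - 1/(v+(k:ℝ))) - (p k - p (k+1))) := by
        refine Finset.single_le_sum (f := fun (k : ℕ) =>
          (1/(u+(k:ℝ)) - 1/(v+(k:ℝ))) - (p k - p (k+1))) ?_ ?_
        · intro k _; have := hterm k; linarith
        · simp [hm]
      rw [Finset.sum_sub_distrib] at hsingle
      rw [h0]
      push_cast at hsingle ⊢
      linarith
    have htel : ∑ k ∈ Finset.range m, (p k - p (k+1)) = p 0 - p m :=
      Finset.sum_range_sub' p m
    -- digamma difference
    have hdv := digamma_add_nat hv m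
    have hdu := digamma_add_nat hu m
    have hlb : Real.log (v + m - 1) ≤ digamma (v + m) := by
      refine log_le_digamma ?_
      have : (1:ℝ) ≤ (m:ℝ) := by exact_mod_cast Nat.one_le_iff_ne_zero.mpr (by simp [hm])
      linarith
    have hub : digamma (u + m) ≤ Real.log (u + m) := digamma_le_log (by positivity)
    -- combine
    have hdiff : digamma v - digamma u = digamma (v+m) - digamma (u+m)
        + ∑ k ∈ Finset.range m, (1/(u+k) - 1/(v+k)) := by
      rw [hdv, hdu, Finset.sum_sub_distrib]
      ring
    have hp0 : p 0 = Real.log v - Real.log u := by simp [hp]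
    have hpm : p m = Real.log (v + m) - Real.log (u + m) := rfl
    have hcast : (m:ℝ) = (n:ℝ) + 1 := by push_cast [hm]; ring
    calc ε + Real.log v - Real.log u + (Real.log (v + n) - Real.log (v + n + 1))
        = Real.log (v + m - 1) - Real.log (u + m) +
          (ε + (p 0 - p m)) := by
          rw [hp0, hpm, hcast]; ring_nf
      _ ≤ digamma (v+m) - digamma (u+m) + ∑ k ∈ Finset.range m, (1/(u+k) - 1/(v+k)) := by
          have h6 : ε + (p 0 - p m) ≤ ∑ k ∈ Finset.range m, (1/(u+(k:ℝ)) - 1/(v+(k:ℝ))) := by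
            rw [← htel]; exact hsum
          linarith [hlb, hub, h6]
      _ = digamma v - digamma u := hdiff.symm
  -- take limit
  have hlim : Tendsto (fun n : ℕ => ε + Real.log v - Real.log u +
      (Real.log (v + n) - Real.log (v + n + 1))) atTop (𝓝 (ε + Real.log v - Real.log u)) := by
    have h1 : Tendsto (fun n:ℕ => v + (n:ℝ) + 1) atTop atTop := by
      apply tendsto_atTop_add_const_right
      exact tendsto_atTop_add_const_left _ v tendsto_natCast_atTop_atTop
    have h2 : Tendsto (fun n:ℕ => (v + (n:ℝ) + 1)⁻¹) atTop (𝓝 0) := h1.inv_tendsto_atTop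
    have h3 : Tendsto (fun n:ℕ => 1 - (v + (n:ℝ) + 1)⁻¹) atTop (𝓝 1) := by
      simpa using tendsto_const_nhds.sub h2
    have h4 : Tendsto (fun n:ℕ => Real.log (1 - (v + (n:ℝ) + 1)⁻¹)) atTop (𝓝 0) := by
      have := (Real.continuousAt_log one_ne_zero).tendsto.comp h3
      rw [Real.log_one] at this; exact this
    have heq : ∀ n : ℕ, Real.log (v + n) - Real.log (v + n + 1) =
        Real.log (1 - (v + (n:ℝ) + 1)⁻¹) := by
      intro n
      rw [show (1 - (v + (n:ℝ) + 1)⁻¹ : ℝ) = (v + n)/(v + n + 1) by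
          field_simp; ring,
        Real.log_div (by positivity) (by positivity)]
    have h5 : Tendsto (fun n : ℕ => Real.log (v + n) - Real.log (v + n + 1)) atTop (𝓝 0) := by
      simp_rw [heq]; exact h4
    have := tendsto_const_nhds (x := ε + Real.log v - Real.log u) (f := atTop (α := ℕ)) |>.add h5
    simpa using this
  have hge := le_of_tendsto' hlim key
  linarith






noncomputable def Kfun (t : ℝ) : ℝ := Real.log (Real.Gamma t) - t * Real.log t + t

lemma hasDerivAt_Kfun {t : ℝ} (ht : 0 < t) :
    HasDerivAt Kfun (digamma t - Real.log t) t := by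
  have h2 : HasDerivAt (fun y : ℝ => y * Real.log y) (1 * Real.log t + t * t⁻¹) t :=
    (hasDerivAt_id t).mul (Real.hasDerivAt_log ht.ne')
  have h := ((hasDerivAt_logGamma ht).sub h2).add (hasDerivAt_id t)
  refine h.congr_deriv ?_
  rw [mul_inv_cancel₀ ht.ne']
  ring

lemma bregman_pos {x y : ℝ} (hx : 0 < x) (hy : 0 < y) (hxy : x ≠ y) :
    0 < Kfun y - Kfun x - (y - x) * (digamma x - Real.log x) := by
  rcases lt_or_gt_of_ne hxy with h | h
  · -- x < y
    obtain ⟨c, hc, hceq⟩ := exists_hasDerivAt_eq_slope Kfun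
      (fun t => digamma t - Real.log t) h
      (fun t ht => (hasDerivAt_Kfun (lt_of_lt_of_le hx ht.1)).continuousAt.continuousWithinAt)
      (fun t ht => hasDerivAt_Kfun (hx.trans ht.1))
    have hmono := digamma_sub_log_strictMono hx hc.1
    have : Kfun y - Kfun x = (y - x) * (digamma c - Real.log c) := by
      rw [hceq, mul_comm, div_mul_cancel₀ _ (sub_ne_zero.mpr h.ne')]
    rw [this]
    nlinarith [hc.1, hc.2]
  · -- y < x
    obtain ⟨c, hc, hceq⟩ := exists_hasDerivAt_eq_slope Kfun
      (fun t => digamma t - Real.log t) h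
      (fun t ht => (hasDerivAt_Kfun (lt_of_lt_of_le hy ht.1)).continuousAt.continuousWithinAt)
      (fun t ht => hasDerivAt_Kfun (hy.trans ht.1))
    have hmono := digamma_sub_log_strictMono (hy.trans hc.1) hc.2
    have : Kfun x - Kfun y = (x - y) * (digamma c - Real.log c) := by
      rw [hceq, mul_comm, div_mul_cancel₀ _ (sub_ne_zero.mpr h.ne')]
    nlinarith [hc.1, hc.2]


theorem gamma_kl_nonneg (a₁ b₁ a₂ b₂ : ℝ) (ha₁ : 0 < a₁) (hb₁ : 0 < b₁)
    (ha₂ : 0 < a₂) (hb₂ : 0 < b₂) :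
    0 ≤ a₂ * Real.log (b₁ / b₂) - Real.log (Real.Gamma a₁ / Real.Gamma a₂) +
        (a₁ - a₂) * digamma a₁ - (b₁ - b₂) * (a₁ / b₁) ∧
      (a₂ * Real.log (b₁ / b₂) - Real.log (Real.Gamma a₁ / Real.Gamma a₂) +
        (a₁ - a₂) * digamma a₁ - (b₁ - b₂) * (a₁ / b₁) = 0 ↔
        a₁ = a₂ ∧ b₁ = b₂) := by
  have hΓ1 : 0 < Real.Gamma a₁ := Real.Gamma_pos_of_pos ha₁
  have hΓ2 : 0 < Real.Gamma a₂ := Real.Gamma_pos_of_pos ha₂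
  set s : ℝ := a₁ * b₂ / (a₂ * b₁) with hs_def
  have hs : 0 < s := by positivity
  set T1 : ℝ := a₂ * (s - 1 - Real.log s) with hT1
  set T2 : ℝ := Kfun a₂ - Kfun a₁ - (a₂ - a₁) * (digamma a₁ - Real.log a₁) with hT2
  have hlogs : Real.log s = Real.log a₁ + Real.log b₂ - (Real.log a₂ + Real.log b₁) := by
    rw [hs_def, Real.log_div (by positivity) (by positivity),
      Real.log_mul ha₁.ne' hb₂.ne', Real.log_mul ha₂.ne' hb₁.ne']
  have key : a₂ * Real.log (b₁ / b₂) - Real.log (Real.Gamma a₁ / Real.Gamma a₂) +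
        (a₁ - a₂) * digamma a₁ - (b₁ - b₂) * (a₁ / b₁) = T1 + T2 := by
    rw [hT1, hT2, hlogs, hs_def, Real.log_div hb₁.ne' hb₂.ne',
      Real.log_div hΓ1.ne' hΓ2.ne']
    simp only [Kfun]
    field_simp
    ring
  have hT1nonneg : 0 ≤ T1 := by
    have := Real.log_le_sub_one_of_pos hs
    have : 0 ≤ s - 1 - Real.log s := by linarith
    exact mul_nonneg ha₂.le this
  have hT2nonneg : 0 ≤ T2 := by
    rcases eq_or_ne a₁ a₂ with h | h
    · rw [hT2, h]; ring_nf; exact le_refl 0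
    · exact (bregman_pos ha₁ ha₂ h).le
  constructor
  · rw [key]; linarith
  · constructor
    · intro h0
      rw [key] at h0
      have hT1z : T1 = 0 := by linarith
      have hT2z : T2 = 0 := by linarith
      have ha : a₁ = a₂ := by
        by_contra hne
        have := bregman_pos ha₁ ha₂ hne
        rw [hT2] at hT2z
        linarith
      have hs1 : s = 1 := by
        by_contra hsne
        have := Real.log_lt_sub_one_of_pos hs hsne
        have : 0 < T1 := by
          rw [hT1]
          have : 0 < s - 1 - Real.log s := by linarith
          positivity
        linarith
      refine ⟨ha, ?_⟩
      rw [hs_def] at hs1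
      have : a₁ * b₂ = a₂ * b₁ := by
        field_simp at hs1
        linarith
      rw [ha] at this
      exact (mul_left_cancel₀ ha₂.ne' this).symm
    · rintro ⟨h1, h2⟩
      rw [h1, h2, div_self hb₂.ne', div_self hΓ2.ne', Real.log_one]
      ring
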